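/- Let F₀ ⊆ (ℕ → ℕ) be countable and let f* : (ℕ → {0,1}) → (ℕ → ℕ) be continuous such that for every x in Cantor space, f*(x) is eventually different from every function in F₀. Then there exist h : ℕ → ℕ and a nonempty perfect subset P of Cantor space such that h is eventually different from every function in F₀, but for every x ∈ P, h is not eventually different from f*(x). -/
import Mathlib
def EvDiff (f g : ℕ → ℕ) : Prop := ∃ n : ℕ, ∀ m : ℕ, n ≤ m → f m ≠ g m

structure MySt (k : ℕ) where
  M : ℕ
  E : (ℕ → Bool) → (ℕ → Bool)
  H : ℕ → ℕ
  hM : k ≤ M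
  hI1 : ∀ x y : ℕ → Bool, (∀ i, i < k → x i = y i) → E x = E y

structure MyStep (F₀ : Set (ℕ → ℕ)) (f : (ℕ → Bool) → ℕ → ℕ) (G : ℕ → ℕ → ℕ)
    (k : ℕ) (s : MySt k) (t : MySt (k+1)) : Prop where
  mono : s.M < t.M
  cohE : ∀ x n, n < s.M → t.E x n = s.E x n
  cohH : ∀ m, m < s.M → t.H m = s.H m
  split : ∃ q, s.M ≤ q ∧ q < t.M ∧ ∀ x, t.E x q = x k
  avoid : ∀ j, j ≤ k → G j ∈ F₀ → ∀ m, s.M ≤ m → m < t.M → t.H m ≠ G j m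
  agree : ∀ x, ∃ m, s.M ≤ m ∧ m < t.M ∧
    ∀ y : ℕ → Bool, (∀ n, n < t.M → y n = t.E x n) → t.H m = f y m

lemma cyl_mem {U : Set (ℕ → Bool)} (hU : IsOpen U) {x : ℕ → Bool} (hx : x ∈ U) :
    ∃ N, ∀ y : ℕ → Bool, (∀ i, i < N → y i = x i) → y ∈ U := by
  obtain ⟨I, u, hu, hsub⟩ := isOpen_pi_iff.mp hU x hx
  refine ⟨I.sup id + 1, fun y hy => hsub ?_⟩
  intro a ha
  have hya : y a = x a := hy a (Nat.lt_succ_of_le (Finset.le_sup (f := id) ha))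
  rw [hya]
  exact (hu a ha).2

def myInit : MySt 0 :=
  ⟨0, fun _ _ => false, fun _ => 0, le_rfl, fun _ _ _ => rfl⟩

lemma myKey (F₀ : Set (ℕ → ℕ)) (f : (ℕ → Bool) → ℕ → ℕ) (G : ℕ → ℕ → ℕ)
    (hf : Continuous f) (hed : ∀ x : ℕ → Bool, ∀ g ∈ F₀, EvDiff (f x) g)
    (k : ℕ) (s : MySt k) : ∃ t : MySt (k+1), MyStep F₀ f G k s t := by
  classical
  have hfm : ∀ (x : ℕ → Bool) (m : ℕ), ∃ N, ∀ y : ℕ → Bool,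
      (∀ i, i < N → y i = x i) → f y m = f x m := by
    intro x m
    have hU : IsOpen ((fun y => f y m) ⁻¹' {f x m}) :=
      (isOpen_discrete _).preimage ((continuous_apply m).comp hf)
    obtain ⟨N, hN⟩ := cyl_mem hU (by simp : x ∈ _)
    exact ⟨N, fun y hy => hN y hy⟩
  set ext : (Fin k → Bool) → (ℕ → Bool) := fun b i => if h : i < k then b ⟨i, h⟩ else false
    with hext
  set xb : (Fin k → Bool) → (ℕ → Bool) := fun b => s.E (ext b) with hxb
  have hB : ∀ (b : Fin k → Bool) (j : ℕ),
      ∃ B, G j ∈ F₀ → ∀ m, B ≤ m → f (xb b) m ≠ G j m := by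
    intro b j
    by_cases hj : G j ∈ F₀
    · obtain ⟨p, hp⟩ := hed (xb b) (G j) hj
      exact ⟨p, fun _ => hp⟩
    · exact ⟨0, fun h => absurd h hj⟩
  choose B hBs using hB
  set idx : (Fin k → Bool) → ℕ := fun b => ((Fintype.equivFin (Fin k → Bool)) b : ℕ) with hidx
  have idx_inj : Function.Injective idx := fun a b h =>
    (Fintype.equivFin _).injective (Fin.val_injective h)
  obtain ⟨N, hNsM, hNB⟩ : ∃ N, s.M < N ∧ ∀ (b : Fin k → Bool) (j : ℕ), j ≤ k → B b j ≤ N := by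
    refine ⟨s.M + 1 + Finset.univ.sup (fun b : Fin k → Bool => (Finset.range (k+1)).sup (B b)),
      by omega, fun b j hj => ?_⟩
    have h1 : B b j ≤ (Finset.range (k+1)).sup (B b) :=
      Finset.le_sup (Finset.mem_range.mpr (Nat.lt_succ_of_le hj))
    have h2 : (Finset.range (k+1)).sup (B b) ≤ Finset.univ.sup
        (fun b : Fin k → Bool => (Finset.range (k+1)).sup (B b)) :=
      Finset.le_sup (f := fun b : Fin k → Bool => (Finset.range (k+1)).sup (B b))
        (Finset.mem_univ b)
    omega
  set mb : (Fin k → Bool) → ℕ := fun b => N + idx b with hmb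
  have hmbN : ∀ b, N ≤ mb b := fun b => Nat.le_add_right _ _
  choose N₂ hN₂ using fun b : Fin k → Bool => hfm (xb b) (mb b)
  obtain ⟨M₂, hsMM, hNM, hmbM⟩ : ∃ M₂, s.M + 1 ≤ M₂ ∧ (∀ b, N₂ b ≤ M₂) ∧ ∀ b, mb b < M₂ := by
    refine ⟨max (Finset.univ.sup mb + 1) (max (Finset.univ.sup N₂) (s.M + 1)),
      le_max_of_le_right (le_max_right _ _), fun b => ?_, fun b => ?_⟩
    · exact le_max_of_le_right (le_max_of_le_left (Finset.le_sup (Finset.mem_univ b)))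
    · exact lt_of_lt_of_le (Nat.lt_succ_of_le (Finset.le_sup (Finset.mem_univ b)))
        (le_max_left _ _)
  set E' : (ℕ → Bool) → (ℕ → Bool) := fun x n =>
    if n < M₂ then s.E x n else if n = M₂ then x k else false with hE'
  set H' : ℕ → ℕ := fun m =>
    if m < s.M then s.H m
    else if h : ∃ b : Fin k → Bool, m = mb b then f (xb h.choose) m
    else 1 + (Finset.range (k+1)).sup (fun j => G j m) with hH'
  have hkM : k ≤ s.M := s.hM
  refine ⟨⟨M₂ + 1, E', H', by omega, ?_⟩, ?_, ?_, ?_, ?_, ?_, ?_⟩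
  · -- hI1
    intro x y hxy
    funext n
    simp only [hE']
    split
    · exact congrFun (s.hI1 x y (fun i hi => hxy i (by omega))) n
    · split
      · exact hxy k (by omega)
      · rfl
  · -- mono
    show s.M < M₂ + 1
    omega
  · -- cohE
    intro x n hn
    show E' x n = s.E x n
    have hnM : n < M₂ := by omega
    simp [hE', hnM]
  · -- cohH
    intro m hm
    show H' m = s.H m
    simp [hH', hm]
  · -- split
    refine ⟨M₂, by omega, Nat.lt_succ_self M₂, fun x => ?_⟩
    show E' x M₂ = x k
    simp [hE']
  · -- avoid
    intro j hj hjF m hm1 hm2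
    have hm2' : m < M₂ + 1 := hm2
    have hmns : ¬ m < s.M := by omega
    show H' m ≠ G j m
    by_cases hb : ∃ b : Fin k → Bool, m = mb b
    · have hv : H' m = f (xb hb.choose) m := by simp [hH', hmns, hb]
      rw [hv]
      refine hBs hb.choose j hjF m ?_
      have h1 := hb.choose_spec
      have h2 := hNB hb.choose j hj
      have h3 := hmbN hb.choose
      omega
    · have hv : H' m = 1 + (Finset.range (k+1)).sup (fun j => G j m) := by
        simp [hH', hmns, hb]
      rw [hv]
      have : G j m ≤ (Finset.range (k+1)).sup (fun j => G j m) :=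
        Finset.le_sup (f := fun j => G j m) (Finset.mem_range.mpr (Nat.lt_succ_of_le hj))
      omega
  · -- agree
    intro x
    set b : Fin k → Bool := fun i => x (i : ℕ) with hb
    have hExb : s.E x = xb b := by
      apply s.hI1
      intro i hi
      simp [hext, hi, hb]
    refine ⟨mb b, ?_, ?_, ?_⟩
    · have := hmbN b; omega
    · have h1 := hmbM b
      show mb b < M₂ + 1
      omega
    · intro y hy
      have hy' : ∀ n, n < M₂ + 1 → y n = E' x n := hy
      have hbe : ∃ b' : Fin k → Bool, mb b = mb b' := ⟨b, rfl⟩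
      have hch : hbe.choose = b := by
        have hcs := hbe.choose_spec
        exact (idx_inj (by simpa [hmb] using hcs.symm))
      have hmns : ¬ mb b < s.M := by have := hmbN b; omega
      show H' (mb b) = f y (mb b)
      have hH'v : H' (mb b) = f (xb b) (mb b) := by
        simp only [hH', hmns, if_false, dif_pos hbe, hch]
      rw [hH'v]
      refine (hN₂ b y ?_).symm
      intro i hi
      have hiM : i < M₂ := lt_of_lt_of_le hi (hNM b)
      have hyi := hy' i (by omega)
      rw [hyi]
      simp only [hE', if_pos hiM]
      exact congrFun hExb i

theorem stmt10 (F₀ : Set (ℕ → ℕ)) (hc : F₀.Countable)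
    (f : (ℕ → Bool) → (ℕ → ℕ)) (hf : Continuous f)
    (hed : ∀ x : ℕ → Bool, ∀ g ∈ F₀, EvDiff (f x) g) :
    ∃ (h : ℕ → ℕ) (P : Set (ℕ → Bool)), P.Nonempty ∧ Perfect P ∧
      (∀ g ∈ F₀, EvDiff h g) ∧ ∀ x ∈ P, ¬ EvDiff h (f x) := by
  classical
  obtain ⟨G, hG⟩ : ∃ G : ℕ → ℕ → ℕ, ∀ g ∈ F₀, ∃ j, G j = g := by
    rcases F₀.eq_empty_or_nonempty with hF | hF
    · exact ⟨fun _ _ => 0, by simp [hF]⟩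
    · obtain ⟨G, hGr⟩ := hc.exists_eq_range hF
      refine ⟨G, fun g hg => ?_⟩
      rw [hGr] at hg
      obtain ⟨j, hj⟩ := hg
      exact ⟨j, hj⟩
  let s : ∀ k, MySt k := fun k =>
    Nat.rec myInit (fun k sk => (myKey F₀ f G hf hed k sk).choose) k
  have hst : ∀ k, MyStep F₀ f G k (s k) (s (k+1)) :=
    fun k => (myKey F₀ f G hf hed k (s k)).choose_spec
  have hM0 : (s 0).M = 0 := rfl
  have hMle : ∀ {a b : ℕ}, a ≤ b → (s a).M ≤ (s b).M := by
    intro a b hab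
    induction hab with
    | refl => exact le_rfl
    | step h ih => exact ih.trans (hst _).mono.le
  have hEc : ∀ a b, a ≤ b → ∀ x n, n < (s a).M → (s b).E x n = (s a).E x n := by
    intro a b hab
    induction hab with
    | refl => intro x n _; rfl
    | @step c h ih =>
      intro x n hn
      rw [(hst c).cohE x n (lt_of_lt_of_le hn (hMle h))]
      exact ih x n hn
  have hHc : ∀ a b, a ≤ b → ∀ m, m < (s a).M → (s b).H m = (s a).H m := by
    intro a b hab
    induction hab with
    | refl => intro m _; rfl
    | @step c h ih =>
      intro m hm
      rw [(hst c).cohH m (lt_of_lt_of_le hm (hMle h))]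
      exact ih m hm
  set e : (ℕ → Bool) → (ℕ → Bool) := fun x n => (s (n+1)).E x n with he
  set H : ℕ → ℕ := fun m => (s (m+1)).H m with hH
  have hnM : ∀ n, n < (s (n+1)).M := fun n => lt_of_lt_of_le (Nat.lt_succ_self n) (s (n+1)).hM
  have heE : ∀ k x n, n < (s k).M → (s k).E x n = e x n := by
    intro k x n hn
    rcases le_total k (n+1) with h | h
    · exact (hEc k (n+1) h x n hn).symm
    · exact hEc (n+1) k h x n (hnM n)
  have hhH : ∀ k m, m < (s k).M → (s k).H m = H m := by
    intro k m hm
    rcases le_total k (m+1) with h | h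
    · exact (hHc k (m+1) h m hm).symm
    · exact hHc (m+1) k h m (hnM m)
  have he_cont : Continuous e := by
    apply continuous_pi
    intro n
    have hfac : (fun x => e x n) =
        (fun b : Fin (n+1) → Bool =>
          (s (n+1)).E (fun i => if h : i < n+1 then b ⟨i, h⟩ else false) n) ∘
        (fun x (i : Fin (n+1)) => x (i : ℕ)) := by
      funext x
      simp only [Function.comp]
      have := (s (n+1)).hI1 x (fun i => if h : i < n+1 then x i else false)
        (fun i hi => by simp [hi])
      have h2 := congrFun this n
      simpa using h2
    rw [hfac]
    exact continuous_of_discreteTopology.comp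
      (continuous_pi (fun i : Fin (n+1) => continuous_apply (i : ℕ)))
  have he_inj : Function.Injective e := by
    intro x y hxy
    funext k
    obtain ⟨q, hq1, hq2, hq3⟩ := (hst k).split
    have h1 : e x q = x k := by rw [← heE (k+1) x q hq2, hq3]
    have h2 : e y q = y k := by rw [← heE (k+1) y q hq2, hq3]
    rw [← h1, ← h2, hxy]
  have hfind : ∀ m, ∃ k, (s k).M ≤ m ∧ m < (s (k+1)).M := by
    intro m
    have hex : ∃ k, m < (s k).M := ⟨m+1, hnM m⟩
    have hk0 : m < (s (Nat.find hex)).M := Nat.find_spec hex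
    have hk0ne : Nat.find hex ≠ 0 := by
      intro hcon
      rw [hcon, hM0] at hk0
      omega
    obtain ⟨k, hk⟩ := Nat.exists_eq_succ_of_ne_zero hk0ne
    refine ⟨k, le_of_not_gt (Nat.find_min hex (by omega)), ?_⟩
    rw [← Nat.succ_eq_add_one, ← hk]
    exact hk0
  refine ⟨H, Set.range e, Set.range_nonempty _, ⟨(isCompact_range he_cont).isClosed, ?_⟩,
    ?_, ?_⟩
  · -- Preperfect
    rw [preperfect_iff_nhds]
    rintro z ⟨x, rfl⟩ U hU
    have hUo : e ⁻¹' U ∈ nhds x := he_cont.continuousAt.preimage_mem_nhds hU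
    obtain ⟨V, hVU, hVo, hxV⟩ := mem_nhds_iff.mp hUo
    obtain ⟨n, hn⟩ := cyl_mem hVo hxV
    set x' : ℕ → Bool := fun i => if i = n then !(x n) else x i with hx'
    have hx'V : x' ∈ V := hn x' (fun i hi => by simp [hx', Nat.ne_of_lt hi])
    have hx'ne : x' ≠ x := by
      intro hcon
      have := congrFun hcon n
      simp [hx'] at this
    exact ⟨e x', ⟨hVU hx'V, Set.mem_range_self x'⟩, fun hcon => hx'ne (he_inj hcon)⟩
  · -- EvDiff from all of F₀
    intro g hg
    obtain ⟨j, rfl⟩ := hG g hg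
    refine ⟨(s j).M, fun m hm => ?_⟩
    obtain ⟨k, hk1, hk2⟩ := hfind m
    have hjk : j ≤ k := by
      by_contra hcon
      push_neg at hcon
      exact absurd hk2 (not_lt.mpr ((hMle hcon).trans hm))
    have hne := (hst k).avoid j hjk hg m hk1 hk2
    rwa [hhH (k+1) m hk2] at hne
  · -- not EvDiff from f x on P
    rintro z ⟨x, rfl⟩ ⟨n, hn⟩
    obtain ⟨m, hm1, hm2, hm3⟩ := (hst n).agree x
    have hy : ∀ i, i < (s (n+1)).M → e x i = (s (n+1)).E x i :=
      fun i hi => (heE (n+1) x i hi).symm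
    have h1 : (s (n+1)).H m = f (e x) m := hm3 (e x) hy
    have h2 : H m = f (e x) m := by rw [← hhH (n+1) m hm2]; exact h1
    exact hn m (le_trans (s n).hM hm1) h2
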